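/- q-Zeilberger certificate for Sylvester's identity: Let q, x be complex numbers with |q| < 1 and x q^j ≠ 1 for every integer j ≥ 1. For each integer k ≥ 0 define F_k(x) = (−1)^k q^{k(3k+1)/2} x^k (1 − x q^{2k+1}) / ((q;q)_k · (x q^{k+1};q)_∞), and for k ≥ 1 define H_k(x) = (−1)^{k+1} q^{k(3k+1)/2} x^k / ((q;q)_{k−1} · (x q^{k+1};q)_∞), with H_0(x) = 0. Then for every integer k ≥ 0, F_k(x) − F_k(xq) = H_{k+1}(x) − H_k(x). -/

import Mathlib

/-- The finite q-Pochhammer symbol `(a; q)_k = ∏_{i=0}^{k-1} (1 - a q^i)`. -/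
noncomputable def qPoch (q a : ℂ) (k : ℕ) : ℂ := ∏ i ∈ Finset.range k, (1 - a * q ^ i)

/-- The infinite q-Pochhammer symbol `(a; q)_∞ = ∏_{i=0}^{∞} (1 - a q^i)`. -/
noncomputable def qPochInf (q a : ℂ) : ℂ := ∏' i : ℕ, (1 - a * q ^ i)

/-- The summand `F_k(x)` of the Sylvester series. -/
noncomputable def F (q x : ℂ) (k : ℕ) : ℂ :=
  (-1) ^ k * q ^ (k * (3 * k + 1) / 2) * x ^ k * (1 - x * q ^ (2 * k + 1)) /
    (qPoch q q k * qPochInf q (x * q ^ (k + 1)))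

/-- The certificate `H_k(x)`, with `H_0(x) = 0`. -/
noncomputable def H (q x : ℂ) (k : ℕ) : ℂ :=
  if k = 0 then 0
  else (-1) ^ (k + 1) * q ^ (k * (3 * k + 1) / 2) * x ^ k /
    (qPoch q q (k - 1) * qPochInf q (x * q ^ (k + 1)))

set_option maxHeartbeats 1000000 in
open Filter in
lemma multipliable_aux (q a : ℂ) (hq : ‖q‖ < 1) (h0 : ∀ n : ℕ, 1 - a * q ^ n ≠ 0) :
    Multipliable (fun n : ℕ => 1 - a * q ^ n) := by
  have hsum : Summable (fun n : ℕ => Complex.log (1 - a * q ^ n)) := by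
    have hgeo : Summable (fun n : ℕ => (3/2 : ℝ) * (‖a‖ * ‖q‖ ^ n)) :=
      ((summable_geometric_of_lt_one (norm_nonneg q) hq).mul_left ‖a‖).mul_left _
    apply Summable.of_norm_bounded_eventually hgeo
    have hto : Tendsto (fun n : ℕ => ‖a‖ * ‖q‖ ^ n) atTop (nhds 0) := by
      simpa using (tendsto_pow_atTop_nhds_zero_of_lt_one
        (norm_nonneg q) hq).const_mul ‖a‖
    rw [Nat.cofinite_eq_atTop]
    filter_upwards [hto.eventually_le_const (by norm_num : (0:ℝ) < 1/2)] with n hn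
    have hle : ‖a * q ^ n‖ ≤ ‖a‖ * ‖q‖ ^ n := by
      rw [norm_mul]; gcongr; exact norm_pow_le _ _
    have hb : ‖-(a * q ^ n)‖ ≤ 1/2 := by rw [norm_neg]; exact hle.trans hn
    have hlog := Complex.norm_log_one_add_half_le_self hb
    rw [show (1 : ℂ) + -(a * q ^ n) = 1 - a * q ^ n by ring] at hlog
    refine hlog.trans ?_
    rw [norm_neg]
    nlinarith
  exact Complex.multipliable_of_summable_log hsum

set_option maxHeartbeats 1000000 in
lemma qPochInf_shift (q a : ℂ) (hq : ‖q‖ < 1) (h0 : ∀ n : ℕ, 1 - a * q ^ n ≠ 0) :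
    qPochInf q a = (1 - a) * qPochInf q (a * q) := by
  have h1 : ∀ n : ℕ, 1 - (a * q) * q ^ n ≠ 0 := fun n => by
    have h := h0 (n + 1)
    rwa [show a * q ^ (n + 1) = (a * q) * q ^ n by ring] at h
  have hm' : Multipliable (fun n : ℕ => 1 - a * q ^ (n + 1)) :=
    (multipliable_aux q (a * q) hq h1).congr (fun n => by ring)
  have h := tprod_eq_zero_mul' (f := fun n : ℕ => 1 - a * q ^ n) hm'
  simp only [pow_zero, mul_one] at h
  rw [qPochInf, qPochInf, h]
  congr 1
  exact tprod_congr fun n => by ring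

lemma qPoch_succ (q a : ℂ) (k : ℕ) :
    qPoch q a (k + 1) = qPoch q a k * (1 - a * q ^ k) := Finset.prod_range_succ _ _

lemma ediv_succ (k : ℕ) : (k+1)*(3*(k+1)+1)/2 = k*(3*k+1)/2 + (3*k+2) := by
  rw [show (k+1)*(3*(k+1)+1) = k*(3*k+1) + (3*k+2)*2 by ring,
    Nat.add_mul_div_right _ _ (by norm_num : (0:ℕ) < 2)]

/-- q-Zeilberger certificate for Sylvester's identity. -/
theorem sylvester_certificate (q x : ℂ) (hq : ‖q‖ < 1)
    (hx : ∀ j : ℕ, 1 ≤ j → x * q ^ j ≠ 1) :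
    ∀ k : ℕ, F q x k - F q (x * q) k = H q x (k + 1) - H q x k := by
  have hxq : ∀ m : ℕ, 1 ≤ m → (1 : ℂ) - x * q ^ m ≠ 0 := by
    intro m hm h
    exact hx m hm (by linear_combination -h)
  have hqm : ∀ m : ℕ, (1 : ℂ) - q * q ^ m ≠ 0 := by
    intro m h
    rw [sub_eq_zero] at h
    have : ‖q * q ^ m‖ < 1 := by
      rw [norm_mul, norm_pow]
      have h1 : ‖q‖ ^ m ≤ 1 := pow_le_one₀ (norm_nonneg q) hq.le
      nlinarith [norm_nonneg q]
    rw [← h] at this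
    simp at this
  have hpoch : ∀ m : ℕ, qPoch q q m ≠ 0 := by
    intro m
    rw [qPoch]
    exact Finset.prod_ne_zero_iff.mpr fun i _ => hqm i
  have key : ∀ m : ℕ, 1 ≤ m →
      qPochInf q (x * q ^ m) = (1 - x * q ^ m) * qPochInf q (x * q ^ (m + 1)) := by
    intro m hm
    have h0 : ∀ n : ℕ, 1 - (x * q ^ m) * q ^ n ≠ 0 := by
      intro n
      rw [show x * q ^ m * q ^ n = x * q ^ (m + n) by rw [pow_add]; ring]
      exact hxq (m + n) (le_trans hm (Nat.le_add_right _ _))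
    have := qPochInf_shift q (x * q ^ m) hq h0
    rwa [show x * q ^ m * q = x * q ^ (m + 1) by rw [pow_succ]; ring] at this
  intro k
  rcases k with _ | n
  · -- k = 0
    simp only [F, H, if_pos rfl, if_neg (one_ne_zero), qPoch, Finset.range_zero,
      Finset.prod_empty, pow_zero, pow_one, mul_one, one_mul, sub_zero]
    norm_num
    rw [show x * q = x * q ^ 1 by ring, show x * q ^ 1 * q = x * q ^ 2 by ring,
      key 1 le_rfl, show x * q ^ (1 + 1) = x * q ^ 2 by norm_num]
    rcases eq_or_ne (qPochInf q (x * q ^ 2)) 0 with hP | hP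
    · simp [hP]
    · have h1 : (1 : ℂ) - x * q ^ 1 ≠ 0 := hxq 1 le_rfl
      have h1' : (1 : ℂ) - x * q ≠ 0 := by simpa using h1
      field_simp
      ring
  · -- k = n + 1
    have e1 : (n+1)*(3*(n+1)+1)/2 = n*(3*n+1)/2 + (3*n+2) := ediv_succ n
    have e2 : (n+1+1)*(3*(n+1+1)+1)/2 = n*(3*n+1)/2 + (6*n+7) := by
      rw [ediv_succ (n+1), ediv_succ n]; omega
    simp only [F, H, if_neg (Nat.succ_ne_zero _), if_neg (Nat.succ_ne_zero _),
      Nat.add_sub_cancel]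
    rw [key (n+2) (by omega)]
    rw [show x * q ^ (n + 1 + 1) = x * q ^ (n + 2) by ring_nf,
      show x * q * q ^ (n + 1 + 1) = x * q ^ (n + 3) by rw [pow_succ, pow_succ]; ring,
      show x * q ^ (n + 2 + 1) = x * q ^ (n + 3) by ring_nf,
      show x * q ^ (n + 1 + 1 + 1) = x * q ^ (n + 3) by ring_nf]
    rw [e1, e2, qPoch_succ]
    set P := qPochInf q (x * q ^ (n + 3)) with hPdef
    rcases eq_or_ne P 0 with hP | hP
    · simp [hP]
    · have hA : qPoch q q n ≠ 0 := hpoch n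
      have hb : (1 : ℂ) - q * q ^ n ≠ 0 := hqm n
      have hu : (1 : ℂ) - x * q ^ (n + 2) ≠ 0 := hxq (n + 2) (by omega)
      field_simp
      ring
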